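/- Let E, F be finite sets, d ≥ 1, and α, β : E → F injective maps with disjoint images. Then the induced maps α_*, β_* : M̃(d,E) → M̃(d,F) are homotopic; explicitly, H(s, Φ) = Φ_{(1−s, s)}^{(α,β)} is a continuous homotopy from α_* to β_* through oriented tropical Plücker vectors. -/

import Mathlib

open Finset

noncomputable section

/-! ### Alternating functions and oriented tropical Plücker vectors -/

/-- A function `Φ : E^d → ℝ` is alternating. -/
def IsAlternating {E : Type*} {d : ℕ} (Φ : (Fin d → E) → ℝ) : Prop :=
  (∀ (σ : Equiv.Perm (Fin d)) (x : Fin d → E),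
      Φ (x ∘ σ) = ((Equiv.Perm.sign σ : ℤ) : ℝ) * Φ x) ∧
  ∀ x : Fin d → E, ¬ Function.Injective x → Φ x = 0

/-- The `i`-th term `(-1)^i · Φ(x₁,…,x̂ᵢ,…,x_{d+1}) · Φ(xᵢ,y₁,…,y_{d-1})` of the
oriented (tropical) Plücker relation attached to tuples `X ∈ E^{d+1}`, `Y ∈ E^{d-1}`. -/
def delTerm {E : Type*} {d n : ℕ} (hn : d = n + 1) (Φ : (Fin d → E) → ℝ)
    (X : Fin (d + 1) → E) (Y : Fin n → E) (i : Fin (d + 1)) : ℝ :=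
  (-1 : ℝ) ^ (i : ℕ) * Φ (X ∘ i.succAbove) * Φ (Fin.cons (X i) Y ∘ Fin.cast hn)

/-- `Φ : E^d → ℝ` is an oriented tropical Plücker vector of rank `d` on `E`:
it is alternating, not identically zero, and for every `X ∈ E^{d+1}`, `Y ∈ E^{d-1}`
the list of terms of the Plücker relation is identically zero or its maximum absolute
value is attained both at a positive entry and at a negative entry. -/
def IsOrientedTP {E : Type*} (d : ℕ) (Φ : (Fin d → E) → ℝ) : Prop :=
  IsAlternating Φ ∧ (∃ x, Φ x ≠ 0) ∧
  ∀ (n : ℕ) (hn : d = n + 1) (X : Fin (d + 1) → E) (Y : Fin n → E),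
    (∀ i, delTerm hn Φ X Y i = 0) ∨
    ∃ ip im : Fin (d + 1),
      0 < delTerm hn Φ X Y ip ∧ delTerm hn Φ X Y im < 0 ∧
      (∀ k, |delTerm hn Φ X Y k| ≤ delTerm hn Φ X Y ip) ∧
      ∀ k, |delTerm hn Φ X Y k| ≤ -delTerm hn Φ X Y im

/-- `M̃(d,E)`: the space of oriented tropical Plücker vectors of rank `d` on `E`,
as a subset of `ℝ^{E^d}`. -/
def Mt (d : ℕ) (E : Type*) : Set ((Fin d → E) → ℝ) := {Φ | IsOrientedTP d Φ}

open Classical in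
/-- Pushforward of `Φ : E^d → ℝ` along an (injective) map `α : E → F`. -/
noncomputable def pushforward {E F : Type*} {d : ℕ} (α : E → F) (Φ : (Fin d → E) → ℝ) :
    (Fin d → F) → ℝ :=
  fun y => if h : ∃ x : Fin d → E, ∀ i, y i = α (x i) then Φ h.choose else 0

/-! ### Finsets, ordered tuples, evaluation -/

/-- The increasing enumeration of a `d`-element finite subset of a linearly ordered set. -/
def finsetTuple {E : Type*} [LinearOrder E] {d : ℕ} (B : Finset E) (h : B.card = d) :
    Fin d → E :=
  fun i => (B.orderIsoOfFin h i : E)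

/-- Evaluation of an alternating function on a finite set, via its increasing enumeration
(and `0` if the set does not have the right cardinality). -/
noncomputable def evalOn {E : Type*} [LinearOrder E] {d : ℕ} (χ : (Fin d → E) → ℝ)
    (B : Finset E) : ℝ :=
  if h : B.card = d then χ (finsetTuple B h) else 0

/-! ### Tropical numbers and valuated matroids -/

/-- `−log|x| ∈ 𝕋 = ℝ ∪ {∞}` (with `−log 0 = ∞`). -/
noncomputable def negLogAbs (x : ℝ) : WithTop ℝ :=
  if x = 0 then ⊤ else ((- Real.log |x| : ℝ) : WithTop ℝ)

/-- The map `𝕋 → ℝ`, `x ↦ e^{−x}` (with `∞ ↦ 0`); it is injective with image `[0,∞)`,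
so the topology on `𝕋` making it a homeomorphism onto `[0,∞)` is the topology induced by it. -/
noncomputable def tropToReal : WithTop ℝ → ℝ :=
  WithTop.recTopCoe 0 fun r => Real.exp (-r)

/-- `I_φ(X,Y)`: the set of `i ∈ X \ Y` attaining the minimum of `φ(X∖{i}) + φ(Y∪{i})`. -/
def argminSet {E : Type*} [DecidableEq E] (φ : Finset E → WithTop ℝ) (X Y : Finset E) :
    Set E :=
  {i | i ∈ X \ Y ∧ ∀ j ∈ X \ Y,
    φ (X.erase i) + φ (insert i Y) ≤ φ (X.erase j) + φ (insert j Y)}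

/-- `φ` is a tropical Plücker vector of rank `d`: not identically `∞` on `binom(E,d)`,
and each `I_φ(X,Y)` has cardinality at least `2`. -/
def IsTropPlucker {E : Type*} [DecidableEq E] (d : ℕ) (φ : Finset E → WithTop ℝ) : Prop :=
  (∃ B : Finset E, B.card = d ∧ φ B ≠ ⊤) ∧
  ∀ X Y : Finset E, X.card = d + 1 → Y.card = d - 1 →
    ∃ i ∈ argminSet φ X Y, ∃ j ∈ argminSet φ X Y, i ≠ j

/-- The (tropical) Plücker coordinates `B ↦ −log|Φ(B)|` of `Φ`. -/
noncomputable def tropOf {E : Type*} [LinearOrder E] {d : ℕ} (Φ : (Fin d → E) → ℝ) :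
    Finset E → WithTop ℝ :=
  fun B => negLogAbs (evalOn Φ B)

/-! ### Chirotopes -/

/-- A chirotope of rank `d` on `E`: an alternating `{−1,0,+1}`-valued function,
not identically zero, satisfying the chirotope exchange condition. -/
def IsChirotope {E : Type*} (d : ℕ) (χ : (Fin d → E) → ℝ) : Prop :=
  (∀ x, χ x = -1 ∨ χ x = 0 ∨ χ x = 1) ∧ IsAlternating χ ∧ (∃ x, χ x ≠ 0) ∧
  ∀ (n : ℕ) (hn : d = n + 1) (X : Fin (d + 1) → E) (Y : Fin n → E),
    (∀ k, delTerm hn χ X Y k = 0) ∨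
    ((∃ k, delTerm hn χ X Y k = 1) ∧ ∃ k, delTerm hn χ X Y k = -1)

/-- Compatibility of a chirotope `χ` with a tropical Plücker vector `φ`:
`φ(B) = ∞` iff `χ(B) = 0`, and for every `X ∈ binom(E,d+1)`, `Y ∈ binom(E,d-1)`
(listed in increasing order) there exist indices `i, j` in the argmin set such that the
corresponding chirotope terms have opposite signs. -/
def ChiCompat {E : Type*} [LinearOrder E] (d : ℕ) (χ : (Fin d → E) → ℝ)
    (φ : Finset E → WithTop ℝ) : Prop :=
  (∀ B : Finset E, B.card = d → (φ B = ⊤ ↔ evalOn χ B = 0)) ∧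
  ∀ (n : ℕ) (hn : d = n + 1) (X Y : Finset E) (hX : X.card = d + 1) (hY : Y.card = n),
    ∃ i j : Fin (d + 1),
      (∀ k : Fin (d + 1),
        φ (X.erase (finsetTuple X hX i)) + φ (insert (finsetTuple X hX i) Y) ≤
          φ (X.erase (finsetTuple X hX k)) + φ (insert (finsetTuple X hX k) Y)) ∧
      (∀ k : Fin (d + 1),
        φ (X.erase (finsetTuple X hX j)) + φ (insert (finsetTuple X hX j) Y) ≤
          φ (X.erase (finsetTuple X hX k)) + φ (insert (finsetTuple X hX k) Y)) ∧
      0 < delTerm hn χ (finsetTuple X hX) (finsetTuple Y hY) i ∧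
      delTerm hn χ (finsetTuple X hX) (finsetTuple Y hY) j < 0

/-! ### The cells `C(p,I)` of the Dressian -/

/-- Membership in the cell `C(p,I)`: a tropical Plücker vector with underlying matroid `p`
and initial datum `I`. -/
def IsInC {E : Type*} [DecidableEq E] (d : ℕ) (p : Finset E → Bool)
    (I : Finset E → Finset E → Set E) (φ : Finset E → WithTop ℝ) : Prop :=
  IsTropPlucker d φ ∧
  (∀ B : Finset E, B.card = d → (p B = true ↔ φ B ≠ ⊤)) ∧
  ∀ X Y : Finset E, X.card = d + 1 → Y.card = d - 1 → argminSet φ X Y = I X Y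

/-- The support (set of bases) of a matroid `p : binom(E,d) → {0,1}`. -/
def suppSet {E : Type*} (d : ℕ) (p : Finset E → Bool) : Set (Finset E) :=
  {B | B.card = d ∧ p B = true}

open Classical in
/-- Extend a vector of finite coordinates on `supp(p)` to all of `binom(E,d)` by `∞`. -/
noncomputable def extendFin {E : Type*} (d : ℕ) (p : Finset E → Bool)
    (f : ↥(suppSet d p) → ℝ) : Finset E → WithTop ℝ :=
  fun B => if h : B ∈ suppSet d p then ((f ⟨B, h⟩ : ℝ) : WithTop ℝ) else ⊤

/-- The cell `C(p,I)`, identified with a subset of `ℝ^{supp(p)}` by recording the finite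
coordinates. -/
def CRealCoords {E : Type*} [DecidableEq E] (d : ℕ) (p : Finset E → Bool)
    (I : Finset E → Finset E → Set E) : Set (↥(suppSet d p) → ℝ) :=
  {f | IsInC d p I (extendFin d p f)}

/-- Extend `φ : binom(E,d) → 𝕋` to all finite subsets by `∞`. -/
noncomputable def extendTrop {E : Type*} (d : ℕ)
    (φ : {B : Finset E // B.card = d} → WithTop ℝ) : Finset E → WithTop ℝ :=
  fun B => if h : B.card = d then φ ⟨B, h⟩ else ⊤

/-- The cell `C(p,I)` as a subset of `𝕋^{binom(E,d)}`. -/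
def Cset {E : Type*} [DecidableEq E] (d : ℕ) (p : Finset E → Bool)
    (I : Finset E → Finset E → Set E) : Set ({B : Finset E // B.card = d} → WithTop ℝ) :=
  {φ | IsInC d p I (extendTrop d φ)}

/-- The set of tropical Plücker vectors inside `𝕋^{binom(E,d)}`. -/
def TPVset {E : Type*} [DecidableEq E] (d : ℕ) :
    Set ({B : Finset E // B.card = d} → WithTop ℝ) :=
  {φ | IsTropPlucker d (extendTrop d φ)}

/-! ### Cells of the space of oriented valuated matroids -/

/-- The cell `D̃(χ,I)`: oriented tropical Plücker vectors with chirotope `χ` and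
initial datum `I`. -/
def Dset {E : Type*} [LinearOrder E] (d : ℕ) (χ : (Fin d → E) → ℝ)
    (I : Finset E → Finset E → Set E) : Set ((Fin d → E) → ℝ) :=
  {Φ | IsOrientedTP d Φ ∧ (∀ x, Real.sign (Φ x) = χ x) ∧
    ∀ X Y : Finset E, X.card = d + 1 → Y.card = d - 1 → argminSet (tropOf Φ) X Y = I X Y}

/-- The Plücker coordinates of an alternating function, indexed by `binom(E,d)`. -/
def toCoords {E : Type*} [LinearOrder E] (d : ℕ) (Φ : (Fin d → E) → ℝ) :
    {B : Finset E // B.card = d} → ℝ :=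
  fun B => Φ (finsetTuple B.1 B.2)

/-- The cell `D̃(χ,I)` inside `ℝ^{binom(E,d)}`. -/
def DsetCoords {E : Type*} [LinearOrder E] (d : ℕ) (χ : (Fin d → E) → ℝ)
    (I : Finset E → Finset E → Set E) : Set ({B : Finset E // B.card = d} → ℝ) :=
  toCoords d '' Dset d χ I

/-- `M̃(d,E)` inside `ℝ^{binom(E,d)}`. -/
def MtCoords {E : Type*} [LinearOrder E] (d : ℕ) :
    Set ({B : Finset E // B.card = d} → ℝ) :=
  toCoords d '' Mt d E

open Classical in
/-- The underlying matroid `|χ|` of a chirotope, as `binom(E,d) → {0,1}`. -/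
noncomputable def chiSupp {E : Type*} [LinearOrder E] {d : ℕ} (χ : (Fin d → E) → ℝ) :
    Finset E → Bool :=
  fun B => if evalOn χ B = 0 then false else true

/-- Compatibility of an initial datum `I` with a chirotope `χ`. -/
def InitCompat {E : Type*} [LinearOrder E] (d : ℕ)
    (I : Finset E → Finset E → Set E) (χ : (Fin d → E) → ℝ) : Prop :=
  (∃ φ : Finset E → WithTop ℝ, IsTropPlucker d φ ∧
      (∀ B : Finset E, B.card = d → (φ B ≠ ⊤ ↔ evalOn χ B ≠ 0)) ∧
      ∀ X Y : Finset E, X.card = d + 1 → Y.card = d - 1 → argminSet φ X Y = I X Y) ∧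
  ∀ (n : ℕ) (hn : d = n + 1) (X Y : Finset E) (hX : X.card = d + 1) (hY : Y.card = n),
    (∀ k, delTerm hn χ (finsetTuple X hX) (finsetTuple Y hY) k = 0) ∨
    ∃ kp km : Fin (d + 1),
      finsetTuple X hX kp ∈ I X Y ∧ finsetTuple X hX km ∈ I X Y ∧
      delTerm hn χ (finsetTuple X hX) (finsetTuple Y hY) kp = 1 ∧
      delTerm hn χ (finsetTuple X hX) (finsetTuple Y hY) km = -1

/-- The maximal initial datum `I_max^χ` compatible with a chirotope `χ`. -/
def Imax {E : Type*} [LinearOrder E] (d : ℕ) (χ : (Fin d → E) → ℝ) :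
    Finset E → Finset E → Set E :=
  fun X Y => {x | x ∈ X \ Y ∧ |evalOn χ (X.erase x)| * |evalOn χ (insert x Y)| ≠ 0}

/-! ### The MacPhersonian as a preordered set -/

/-- `τ` is a specialization of `χ`: each Plücker coordinate of `τ` is the corresponding
coordinate of `χ` or `0`. -/
def SpecRel {E : Type*} [LinearOrder E] (d : ℕ) (χ τ : (Fin d → E) → ℝ) : Prop :=
  ∀ B : Finset E, B.card = d → evalOn τ B = evalOn χ B ∨ evalOn τ B = 0

/-- The equivalence `χ ∼ −χ` on functions `E^d → ℝ`. -/
def ChiSetoid (E : Type*) (d : ℕ) : Setoid ((Fin d → E) → ℝ) where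
  r χ τ := τ = χ ∨ τ = -χ
  iseqv := by
    refine ⟨fun x => Or.inl rfl, ?_, ?_⟩
    · rintro x y (rfl | rfl)
      · exact Or.inl rfl
      · exact Or.inr (neg_neg x).symm
    · rintro x y z (rfl | rfl) (rfl | rfl)
      · exact Or.inl rfl
      · exact Or.inr rfl
      · exact Or.inr rfl
      · exact Or.inl (neg_neg x)

/-- The MacPhersonian: elements are equivalence classes `[χ]` of chirotopes of rank `d` on
`E` under `χ ∼ −χ`. -/
def MacP (E : Type*) (d : ℕ) : Type _ :=
  {q : Quotient (ChiSetoid E d) // ∃ χ, IsChirotope d χ ∧ Quotient.mk (ChiSetoid E d) χ = q}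

lemma evalOn_neg {E : Type*} [LinearOrder E] {d : ℕ} (χ : (Fin d → E) → ℝ) (B : Finset E) :
    evalOn (-χ) B = -evalOn χ B := by
  unfold evalOn
  split <;> simp

/-- The specialization preorder on the MacPhersonian. -/
instance MacP.instPreorder (E : Type*) [LinearOrder E] (d : ℕ) : Preorder (MacP E d) where
  le x y := ∃ a b : (Fin d → E) → ℝ,
    Quotient.mk (ChiSetoid E d) a = x.1 ∧ Quotient.mk (ChiSetoid E d) b = y.1 ∧ SpecRel d a b
  le_refl x := by
    obtain ⟨χ, hχ, hq⟩ := x.2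
    exact ⟨χ, χ, hq, hq, fun B _ => Or.inl rfl⟩
  le_trans x y z hxy hyz := by
    obtain ⟨a, b, ha, hb, hab⟩ := hxy
    obtain ⟨b', c, hb', hc, hbc⟩ := hyz
    have comp : ∀ {u v w : (Fin d → E) → ℝ}, SpecRel d u v → SpecRel d v w → SpecRel d u w := by
      intro u v w h1 h2 B hB
      rcases h2 B hB with h | h
      · rw [h]; exact h1 B hB
      · exact Or.inr h
    have hneg : ∀ {u v : (Fin d → E) → ℝ}, SpecRel d u v → SpecRel d (-u) (-v) := by
      intro u v h B hB
      rw [evalOn_neg, evalOn_neg]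
      rcases h B hB with h1 | h1
      · exact Or.inl (by rw [h1])
      · exact Or.inr (by rw [h1, neg_zero])
    have hbb' : b = b' ∨ b = -b' := Quotient.exact (hb'.trans hb.symm)
    rcases hbb' with h | h
    · subst h
      exact ⟨a, c, ha, hc, comp hab hbc⟩
    · have h1 : SpecRel d b (-c) := by
        have := hneg hbc
        rwa [← h] at this
      refine ⟨a, -c, ha, ?_, comp hab h1⟩
      rw [← hc]
      exact Quotient.sound (Or.inr (neg_neg c).symm)

/-! ### Projectivizations -/

/-- The scaling equivalence on a subset `S ⊆ ℝ^ι`. -/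
def scalingSetoid {ι : Type*} (S : Set (ι → ℝ)) : Setoid ↥S where
  r f g := ∃ c : ℝ, c ≠ 0 ∧ (g : ι → ℝ) = c • (f : ι → ℝ)
  iseqv := by
    refine ⟨fun f => ⟨1, one_ne_zero, (one_smul ℝ _).symm⟩, ?_, ?_⟩
    · rintro f g ⟨c, hc, h⟩
      exact ⟨c⁻¹, inv_ne_zero hc, by rw [h, smul_smul, inv_mul_cancel₀ hc, one_smul]⟩
    · rintro f g h ⟨c, hc, h1⟩ ⟨c', hc', h2⟩
      exact ⟨c' * c, mul_ne_zero hc' hc, by rw [h2, h1, smul_smul]⟩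

/-! ### Matroids on the ground set ℕ -/

/-- `Φ : ℕ^d → ℝ` is finitely supported. -/
def FinSupp (d : ℕ) (Φ : (Fin d → ℕ) → ℝ) : Prop :=
  ∃ S : Finset ℕ, ∀ x : Fin d → ℕ, (∃ i, x i ∉ S) → Φ x = 0

/-- `M̃(d,ℕ)`: finitely supported oriented tropical Plücker vectors of rank `d` on `ℕ`. -/
def MtN (d : ℕ) : Set ((Fin d → ℕ) → ℝ) := {Φ | IsOrientedTP d Φ ∧ FinSupp d Φ}

/-- `M(d,ℕ)`: the projectivization of `M̃(d,ℕ)`, with the quotient topology. -/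
abbrev MprojN (d : ℕ) := Quotient (scalingSetoid (MtN d))

/-- Transport along an equality of ranks. -/
def recast {m n : ℕ} (h : m = n) (Φ : (Fin m → ℕ) → ℝ) : (Fin n → ℕ) → ℝ :=
  fun y => Φ (y ∘ Fin.cast h)

/-! ### Matroid sliding -/

open Classical in
/-- The slide `Φ_t^A` of `Φ` along a tuple `A` of injective maps `E → F` with pairwise
disjoint images, at a point `t` of the standard simplex. -/
noncomputable def slide {E F : Type*} {d n : ℕ} (A : Fin (n + 1) → E → F)
    (t : Fin (n + 1) → ℝ) (Φ : (Fin d → E) → ℝ) : (Fin d → F) → ℝ :=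
  fun x =>
    if h : ∀ i, ∃ k e, x i = A k e then
      Φ (fun i => (h i).choose_spec.choose) *
        ∏ k : Fin (n + 1), t k ^ (Finset.univ.filter fun i : Fin d => ∃ e, x i = A k e).card
    else 0

/-! ### Direct sums -/

/-- `D` is the direct sum `Φ₁ ⊕ Φ₂`: the unique alternating function on
`(E₁ ⊔ E₂)^{d₁+d₂}` vanishing on tuples not having exactly `d₁` entries from `E₁` and
`d₂` entries from `E₂`, and restricting to `(x,y) ↦ Φ₁(x)·Φ₂(y)` on `E₁^{d₁} × E₂^{d₂}`. -/
def IsDirectSum {E₁ E₂ : Type*} {d₁ d₂ : ℕ} (Φ₁ : (Fin d₁ → E₁) → ℝ)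
    (Φ₂ : (Fin d₂ → E₂) → ℝ) (D : (Fin (d₁ + d₂) → E₁ ⊕ E₂) → ℝ) : Prop :=
  IsAlternating D ∧
  (∀ z : Fin (d₁ + d₂) → E₁ ⊕ E₂,
      ¬ ((Finset.univ.filter fun i => (z i).isLeft = true).card = d₁ ∧
          (Finset.univ.filter fun i => (z i).isRight = true).card = d₂) → D z = 0) ∧
  ∀ (x : Fin d₁ → E₁) (y : Fin d₂ → E₂),
    D (Sum.elim (fun a => Sum.inl (x a)) (fun b => Sum.inr (y b)) ∘ finSumFinEquiv.symm) =
      Φ₁ x * Φ₂ y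

/-! ### Tropical projective space -/

private lemma trop_add_cancel (w : WithTop ℝ) (lam : ℝ) :
    w = w + (lam : WithTop ℝ) + ((-lam : ℝ) : WithTop ℝ) := by
  induction w using WithTop.recTopCoe with
  | top => simp
  | coe r => rw [← WithTop.coe_add, ← WithTop.coe_add, WithTop.coe_inj]; ring

/-- The action of `(ℝ,+)` on `𝕋^n ∖ {(∞,…,∞)}` by simultaneous translation. -/
def tropProjSetoid (n : ℕ) : Setoid {x : Fin n → WithTop ℝ // ∃ i, x i ≠ ⊤} where
  r x y := ∃ lam : ℝ, ∀ i, (y : Fin n → WithTop ℝ) i = x.1 i + (lam : WithTop ℝ)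
  iseqv := by
    refine ⟨fun x => ⟨0, fun i => by simp⟩, ?_, ?_⟩
    · rintro x y ⟨lam, h⟩
      refine ⟨-lam, fun i => ?_⟩
      rw [h i]
      exact trop_add_cancel _ _
    · rintro x y z ⟨lam, h1⟩ ⟨mu, h2⟩
      refine ⟨lam + mu, fun i => ?_⟩
      rw [h2 i, h1 i, WithTop.coe_add, add_assoc]

end

/-! ## Statement 4 -/
section Statement4Aux

variable {E F : Type*} {d : ℕ} {α β : E → F}

lemma preim_uniq (hα : Function.Injective α) (hβ : Function.Injective β)
    (hdisj : Disjoint (Set.range α) (Set.range β))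
    {k k' : Fin 2} {e e' : E} (h : ![α, β] k e = ![α, β] k' e') : e = e' := by
  fin_cases k <;> fin_cases k' <;>
    simp [Matrix.cons_val_zero, Matrix.cons_val_one, Matrix.head_cons, Fin.mk_zero, Fin.mk_one] at h
  · exact hα h
  · exact (Set.disjoint_left.mp hdisj ⟨e, rfl⟩ ⟨e', h.symm⟩).elim
  · exact (Set.disjoint_left.mp hdisj ⟨e', rfl⟩ ⟨e, h⟩).elim
  · exact hβ h

open Classical in
lemma slide_eq_of (hα : Function.Injective α) (hβ : Function.Injective β)
    (hdisj : Disjoint (Set.range α) (Set.range β))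
    (t : Fin 2 → ℝ) (Φ : (Fin d → E) → ℝ) (x : Fin d → F)
    (h : ∀ i, ∃ k e, x i = ![α, β] k e) (g : Fin d → E)
    (hg : ∀ i, ∃ k, x i = ![α, β] k (g i)) :
    slide ![α, β] t Φ x = Φ g *
      ∏ k : Fin 2, t k ^ (Finset.univ.filter fun i : Fin d => ∃ e, x i = ![α, β] k e).card := by
  rw [slide, dif_pos h]
  congr 2
  funext i
  obtain ⟨k, hk⟩ := hg i
  exact preim_uniq hα hβ hdisj (((h i).choose_spec.choose_spec).symm.trans hk)

lemma slide_eq_zero (t : Fin 2 → ℝ) (Φ : (Fin d → E) → ℝ) (x : Fin d → F)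
    (h : ¬ ∀ i, ∃ k e, x i = ![α, β] k e) :
    slide ![α, β] t Φ x = 0 := by
  rw [slide, dif_neg h]

end Statement4Aux
section Statement4Aux2

variable {E F : Type*} {d : ℕ} {α β : E → F}

open Classical in
lemma exp_split {n : ℕ} (hn : d = n + 1) (X : Fin (d + 1) → F) (Y : Fin n → F)
    (i : Fin (d + 1)) (k : Fin 2) :
    (Finset.univ.filter fun m : Fin d => ∃ e, (X ∘ i.succAbove) m = ![α, β] k e).card +
      (Finset.univ.filter fun m : Fin d =>
        ∃ e, (Fin.cons (X i) Y ∘ Fin.cast hn) m = ![α, β] k e).card =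
    (Finset.univ.filter fun j : Fin (d + 1) => ∃ e, X j = ![α, β] k e).card +
      (Finset.univ.filter fun j : Fin n => ∃ e, Y j = ![α, β] k e).card := by
  simp only [Finset.card_filter, Function.comp]
  rw [Fin.sum_univ_succAbove (fun j => if (∃ e, X j = ![α, β] k e) then 1 else 0) i]
  have h2 : (∑ m : Fin d, if (∃ e, (Fin.cons (X i) Y : Fin (n + 1) → F) (Fin.cast hn m) = ![α, β] k e) then 1 else 0)
      = (if (∃ e, X i = ![α, β] k e) then 1 else 0) +
        ∑ j : Fin n, if (∃ e, Y j = ![α, β] k e) then 1 else 0 := by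
    rw [Fintype.sum_equiv (finCongr hn)
      (fun m : Fin d => if (∃ e, (Fin.cons (X i) Y : Fin (n + 1) → F) (Fin.cast hn m) = ![α, β] k e) then 1 else 0)
      (fun m : Fin (n + 1) => if (∃ e, (Fin.cons (X i) Y : Fin (n + 1) → F) m = ![α, β] k e) then 1 else 0)
      (fun m => rfl)]
    rw [Fin.sum_univ_succ]
    simp [Fin.cons_zero, Fin.cons_succ]
  rw [h2]
  ring

open Classical in
lemma delTerm_slide (hα : Function.Injective α) (hβ : Function.Injective β)
    (hdisj : Disjoint (Set.range α) (Set.range β)) {n : ℕ} (hn : d = n + 1)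
    (t : Fin 2 → ℝ) (Φ : (Fin d → E) → ℝ) (X : Fin (d + 1) → F) (Y : Fin n → F)
    (hX : ∀ j, ∃ k e, X j = ![α, β] k e) (hY : ∀ j, ∃ k e, Y j = ![α, β] k e)
    (Xb : Fin (d + 1) → E) (Yb : Fin n → E)
    (hXb : ∀ j, ∃ k, X j = ![α, β] k (Xb j)) (hYb : ∀ j, ∃ k, Y j = ![α, β] k (Yb j))
    (i : Fin (d + 1)) :
    delTerm hn (slide ![α, β] t Φ) X Y i =
      (∏ k : Fin 2, t k ^
        ((Finset.univ.filter fun j : Fin (d + 1) => ∃ e, X j = ![α, β] k e).card +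
         (Finset.univ.filter fun j : Fin n => ∃ e, Y j = ![α, β] k e).card)) *
      delTerm hn Φ Xb Yb i := by
  have hcons : ∀ m : Fin d, ∃ k e, (Fin.cons (X i) Y ∘ Fin.cast hn) m = ![α, β] k e := by
    intro m
    simp only [Function.comp_apply]
    refine Fin.cases (motive := fun j => ∃ k e, (Fin.cons (X i) Y : Fin (n + 1) → F) j = ![α, β] k e) ?_ ?_ (Fin.cast hn m)
    · simpa using hX i
    · exact fun j => by simpa using hY j
  have hconsg : ∀ m : Fin d,
      ∃ k, (Fin.cons (X i) Y ∘ Fin.cast hn) m =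
        ![α, β] k ((Fin.cons (Xb i) Yb ∘ Fin.cast hn) m) := by
    intro m
    simp only [Function.comp_apply]
    refine Fin.cases (motive := fun j => ∃ k, (Fin.cons (X i) Y : Fin (n + 1) → F) j = ![α, β] k ((Fin.cons (Xb i) Yb : Fin (n + 1) → E) j))
      ?_ ?_ (Fin.cast hn m)
    · simpa using hXb i
    · exact fun j => by simpa using hYb j
  rw [delTerm, delTerm,
    slide_eq_of hα hβ hdisj t Φ (X ∘ i.succAbove) (fun m => hX _) (Xb ∘ i.succAbove) (fun m => hXb _),
    slide_eq_of hα hβ hdisj t Φ (Fin.cons (X i) Y ∘ Fin.cast hn) hcons (Fin.cons (Xb i) Yb ∘ Fin.cast hn) hconsg]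
  have hprod : (∏ k : Fin 2, t k ^
        ((Finset.univ.filter fun j : Fin (d + 1) => ∃ e, X j = ![α, β] k e).card +
         (Finset.univ.filter fun j : Fin n => ∃ e, Y j = ![α, β] k e).card)) =
      (∏ k : Fin 2,
        t k ^ (Finset.univ.filter fun m : Fin d => ∃ e, (X ∘ i.succAbove) m = ![α, β] k e).card) *
      (∏ k : Fin 2, t k ^ (Finset.univ.filter fun m : Fin d =>
          ∃ e, (Fin.cons (X i) Y ∘ Fin.cast hn) m = ![α, β] k e).card) := by
    rw [← Finset.prod_mul_distrib]
    refine Finset.prod_congr rfl fun k _ => ?_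
    rw [← pow_add, exp_split hn X Y i k]
  rw [hprod]
  ring

end Statement4Aux2
section Statement4Aux3

variable {E F : Type*} {d : ℕ} {α β : E → F}

open Classical in
lemma slide_alternating (hα : Function.Injective α) (hβ : Function.Injective β)
    (hdisj : Disjoint (Set.range α) (Set.range β))
    (t : Fin 2 → ℝ) (Φ : (Fin d → E) → ℝ) (hΦ : IsAlternating Φ) :
    IsAlternating (slide ![α, β] t Φ) := by
  constructor
  · intro σ x
    by_cases h : ∀ i, ∃ k e, x i = ![α, β] k e
    · have hσ : ∀ i, ∃ k e, (x ∘ σ) i = ![α, β] k e := fun i => h (σ i)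
      set g : Fin d → E := fun i => (h i).choose_spec.choose with hgdef
      have hg : ∀ i, ∃ k, x i = ![α, β] k (g i) :=
        fun i => ⟨(h i).choose, (h i).choose_spec.choose_spec⟩
      rw [slide_eq_of hα hβ hdisj t Φ x h g hg,
          slide_eq_of hα hβ hdisj t Φ (x ∘ σ) hσ (g ∘ σ) (fun i => hg (σ i)),
          hΦ.1 σ g]
      have hcard : ∀ k : Fin 2,
          (Finset.univ.filter fun i : Fin d => ∃ e, (x ∘ σ) i = ![α, β] k e).card =
          (Finset.univ.filter fun i : Fin d => ∃ e, x i = ![α, β] k e).card := by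
        intro k
        refine Finset.card_bij (fun i _ => σ i) ?_ ?_ ?_
        · intro a ha
          simp only [Finset.mem_filter, Finset.mem_univ, true_and] at ha ⊢
          exact ha
        · intro a _ b _ hab
          exact σ.injective hab
        · intro b hb
          refine ⟨σ.symm b, ?_, by simp⟩
          simp only [Finset.mem_filter, Finset.mem_univ, true_and, Function.comp_apply,
            Equiv.apply_symm_apply] at hb ⊢
          exact hb
      simp only [hcard]
      ring
    · have hσ : ¬ ∀ i, ∃ k e, (x ∘ σ) i = ![α, β] k e := by
        intro hc
        exact h fun i => by simpa using hc (σ.symm i)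
      rw [slide_eq_zero t Φ _ hσ, slide_eq_zero t Φ _ h, mul_zero]
  · intro x hx
    by_cases h : ∀ i, ∃ k e, x i = ![α, β] k e
    · set g : Fin d → E := fun i => (h i).choose_spec.choose with hgdef
      have hg : ∀ i, ∃ k, x i = ![α, β] k (g i) :=
        fun i => ⟨(h i).choose, (h i).choose_spec.choose_spec⟩
      have hginj : ¬ Function.Injective g := by
        intro hc
        apply hx
        intro i j hij
        obtain ⟨k, hk⟩ := hg i
        obtain ⟨k', hk'⟩ := hg j
        exact hc (preim_uniq hα hβ hdisj (hk.symm.trans (hij.trans hk')))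
      rw [slide_eq_of hα hβ hdisj t Φ x h g hg, hΦ.2 g hginj, zero_mul]
    · exact slide_eq_zero t Φ x h

lemma slide_comp_left (hα : Function.Injective α) (hβ : Function.Injective β)
    (hdisj : Disjoint (Set.range α) (Set.range β))
    (t : Fin 2 → ℝ) (Φ : (Fin d → E) → ℝ) (x : Fin d → E) :
    slide ![α, β] t Φ (α ∘ x) = Φ x * t 0 ^ d := by
  classical
  rw [slide_eq_of hα hβ hdisj t Φ (α ∘ x) (fun i => ⟨0, x i, by simp⟩) x (fun i => ⟨0, by simp⟩)]
  congr 1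
  rw [Fin.prod_univ_two]
  have h0 : (Finset.univ.filter fun i : Fin d => ∃ e, (α ∘ x) i = ![α, β] 0 e).card = d := by
    rw [Finset.filter_true_of_mem fun i _ => ⟨x i, by simp⟩, Finset.card_univ, Fintype.card_fin]
  have h1 : (Finset.univ.filter fun i : Fin d => ∃ e, (α ∘ x) i = ![α, β] 1 e).card = 0 := by
    rw [Finset.card_eq_zero, Finset.filter_eq_empty_iff]
    rintro i - ⟨e, he⟩
    simp only [Matrix.cons_val_one, Matrix.head_cons, Function.comp_apply] at he
    exact Set.disjoint_left.mp hdisj ⟨x i, rfl⟩ ⟨e, he.symm⟩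
  rw [h0, h1, pow_zero, mul_one]

lemma slide_comp_right (hα : Function.Injective α) (hβ : Function.Injective β)
    (hdisj : Disjoint (Set.range α) (Set.range β))
    (t : Fin 2 → ℝ) (Φ : (Fin d → E) → ℝ) (x : Fin d → E) :
    slide ![α, β] t Φ (β ∘ x) = Φ x * t 1 ^ d := by
  classical
  rw [slide_eq_of hα hβ hdisj t Φ (β ∘ x) (fun i => ⟨1, x i, by simp⟩) x (fun i => ⟨1, by simp⟩)]
  congr 1
  rw [Fin.prod_univ_two]
  have h0 : (Finset.univ.filter fun i : Fin d => ∃ e, (β ∘ x) i = ![α, β] 0 e).card = 0 := by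
    rw [Finset.card_eq_zero, Finset.filter_eq_empty_iff]
    rintro i - ⟨e, he⟩
    simp only [Matrix.cons_val_zero, Function.comp_apply] at he
    exact Set.disjoint_left.mp hdisj ⟨e, he.symm⟩ ⟨x i, rfl⟩
  have h1 : (Finset.univ.filter fun i : Fin d => ∃ e, (β ∘ x) i = ![α, β] 1 e).card = d := by
    rw [Finset.filter_true_of_mem fun i _ => ⟨x i, by simp⟩, Finset.card_univ, Fintype.card_fin]
  rw [h0, h1, pow_zero, one_mul]

end Statement4Aux3
section Statement4Aux4

variable {E F : Type*} {d : ℕ} {α β : E → F}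

open Classical in
lemma slide_isOTP (hα : Function.Injective α) (hβ : Function.Injective β)
    (hdisj : Disjoint (Set.range α) (Set.range β))
    (t : Fin 2 → ℝ) (ht0 : 0 ≤ t 0) (ht1 : 0 ≤ t 1) (htpos : 0 < t 0 ∨ 0 < t 1)
    (Φ : (Fin d → E) → ℝ) (hΦ : IsOrientedTP d Φ) :
    IsOrientedTP d (slide ![α, β] t Φ) := by
  obtain ⟨halt, ⟨x₀, hx₀⟩, hpl⟩ := hΦ
  refine ⟨slide_alternating hα hβ hdisj t Φ halt, ?_, ?_⟩
  · rcases htpos with h | h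
    · exact ⟨α ∘ x₀, by
        rw [slide_comp_left hα hβ hdisj t Φ x₀]
        exact mul_ne_zero hx₀ (pow_ne_zero _ (ne_of_gt h))⟩
    · exact ⟨β ∘ x₀, by
        rw [slide_comp_right hα hβ hdisj t Φ x₀]
        exact mul_ne_zero hx₀ (pow_ne_zero _ (ne_of_gt h))⟩
  · intro n hn X Y
    by_cases hX : ∀ j, ∃ k e, X j = ![α, β] k e
    · by_cases hY : ∀ j, ∃ k e, Y j = ![α, β] k e
      · -- main case
        set Xb : Fin (d + 1) → E := fun j => (hX j).choose_spec.choose with hXbdef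
        have hXb : ∀ j, ∃ k, X j = ![α, β] k (Xb j) :=
          fun j => ⟨(hX j).choose, (hX j).choose_spec.choose_spec⟩
        set Yb : Fin n → E := fun j => (hY j).choose_spec.choose with hYbdef
        have hYb : ∀ j, ∃ k, Y j = ![α, β] k (Yb j) :=
          fun j => ⟨(hY j).choose, (hY j).choose_spec.choose_spec⟩
        set C : ℝ := ∏ k : Fin 2, t k ^
          ((Finset.univ.filter fun j : Fin (d + 1) => ∃ e, X j = ![α, β] k e).card +
           (Finset.univ.filter fun j : Fin n => ∃ e, Y j = ![α, β] k e).card) with hC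
        have hkey : ∀ i, delTerm hn (slide ![α, β] t Φ) X Y i = C * delTerm hn Φ Xb Yb i :=
          fun i => delTerm_slide hα hβ hdisj hn t Φ X Y hX hY Xb Yb hXb hYb i
        have hC0 : 0 ≤ C := by
          refine Finset.prod_nonneg fun k _ => pow_nonneg ?_ _
          fin_cases k
          · exact ht0
          · exact ht1
        rcases eq_or_lt_of_le hC0 with hC' | hC'
        · left
          intro i
          rw [hkey i, ← hC', zero_mul]
        · rcases hpl n hn Xb Yb with hall | ⟨ip, im, h1, h2, h3, h4⟩
          · left
            intro i
            rw [hkey i, hall i, mul_zero]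
          · right
            refine ⟨ip, im, ?_, ?_, ?_, ?_⟩
            · rw [hkey]; exact mul_pos hC' h1
            · rw [hkey]; exact mul_neg_of_pos_of_neg hC' h2
            · intro k
              rw [hkey, hkey, abs_mul, abs_of_pos hC']
              exact mul_le_mul_of_nonneg_left (h3 k) hC0
            · intro k
              rw [hkey, hkey, abs_mul, abs_of_pos hC', ← mul_neg]
              exact mul_le_mul_of_nonneg_left (h4 k) hC0
      · -- some Y j not in the union: second factor always vanishes
        left
        intro i
        push_neg at hY
        obtain ⟨j, hj⟩ := hY
        have hzero : ¬ ∀ m, ∃ k e, (Fin.cons (X i) Y ∘ Fin.cast hn) m = ![α, β] k e := by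
          intro hc
          obtain ⟨k, e, hke⟩ := hc (Fin.cast hn.symm j.succ)
          apply hj k e
          rw [← hke]
          simp only [Function.comp_apply]
          have hcast : Fin.cast hn (Fin.cast hn.symm j.succ) = j.succ := by
            simp [Fin.ext_iff]
          rw [hcast, Fin.cons_succ]
        rw [delTerm, slide_eq_zero t Φ (Fin.cons (X i) Y ∘ Fin.cast hn) hzero, mul_zero]
    · -- some X j not in the union
      left
      intro i
      push_neg at hX
      obtain ⟨j, hj⟩ := hX
      by_cases hij : i = j
      · subst hij
        have hzero : ¬ ∀ m, ∃ k e, (Fin.cons (X i) Y ∘ Fin.cast hn) m = ![α, β] k e := by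
          intro hc
          obtain ⟨k, e, hke⟩ := hc (Fin.cast hn.symm 0)
          apply hj k e
          rw [← hke]
          simp only [Function.comp_apply]
          have hcast : Fin.cast hn (Fin.cast hn.symm 0) = 0 := by
            simp [Fin.ext_iff]
          rw [hcast, Fin.cons_zero]
        rw [delTerm, slide_eq_zero t Φ (Fin.cons (X i) Y ∘ Fin.cast hn) hzero, mul_zero]
      · obtain ⟨m, hm⟩ := Fin.exists_succAbove_eq (Ne.symm hij)
        have hzero : ¬ ∀ m, ∃ k e, (X ∘ i.succAbove) m = ![α, β] k e := by
          intro hc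
          obtain ⟨k, e, hke⟩ := hc m
          apply hj k e
          rw [← hke]
          simp only [Function.comp_apply, hm]
        rw [delTerm, slide_eq_zero t Φ (X ∘ i.succAbove) hzero, mul_zero, zero_mul]

end Statement4Aux4
section Statement4Aux5

variable {E F : Type*} {d : ℕ} {α β : E → F}

open Classical in
lemma slide_pf_left (hα : Function.Injective α) (hβ : Function.Injective β)
    (hdisj : Disjoint (Set.range α) (Set.range β))
    (t : Fin 2 → ℝ) (h0 : t 0 = 1) (h1 : t 1 = 0) (Φ : (Fin d → E) → ℝ) :
    slide ![α, β] t Φ = pushforward α Φ := by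
  funext x
  by_cases hall : ∀ i, ∃ k e, x i = ![α, β] k e
  · by_cases hin : ∃ g : Fin d → E, ∀ i, x i = α (g i)
    · rw [pushforward, dif_pos hin,
        slide_eq_of hα hβ hdisj t Φ x hall hin.choose
          (fun i => ⟨0, by simpa using hin.choose_spec i⟩)]
      have hc1 : (Finset.univ.filter fun i : Fin d => ∃ e, x i = ![α, β] 1 e).card = 0 := by
        rw [Finset.card_eq_zero, Finset.filter_eq_empty_iff]
        rintro i - ⟨e, he⟩
        simp only [Matrix.cons_val_one, Matrix.head_cons] at he
        exact Set.disjoint_left.mp hdisj ⟨hin.choose i, (hin.choose_spec i).symm⟩ ⟨e, he.symm⟩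
      rw [Fin.prod_univ_two, h0, h1, hc1, one_pow, pow_zero, one_mul, mul_one]
    · rw [pushforward, dif_neg hin]
      have hnotall : ¬ ∀ i, ∃ e, x i = α e := by
        intro hc
        exact hin ⟨fun i => (hc i).choose, fun i => (hc i).choose_spec⟩
      push_neg at hnotall
      obtain ⟨i₀, hi₀⟩ := hnotall
      have hmem : ∃ e, x i₀ = ![α, β] 1 e := by
        obtain ⟨k, e, hke⟩ := hall i₀
        fin_cases k
        · exact absurd (by simpa using hke) (hi₀ e)
        · exact ⟨e, hke⟩
      set g : Fin d → E := fun i => (hall i).choose_spec.choose with hgdef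
      have hg : ∀ i, ∃ k, x i = ![α, β] k (g i) :=
        fun i => ⟨(hall i).choose, (hall i).choose_spec.choose_spec⟩
      rw [slide_eq_of hα hβ hdisj t Φ x hall g hg, Fin.prod_univ_two, h1,
        zero_pow, mul_zero, mul_zero]
      exact Finset.card_ne_zero_of_mem (Finset.mem_filter.mpr ⟨Finset.mem_univ i₀, hmem⟩)
  · rw [slide_eq_zero t Φ x hall, pushforward, dif_neg]
    rintro ⟨g, hg⟩
    exact hall fun i => ⟨0, g i, by simpa using hg i⟩

open Classical in
lemma slide_pf_right (hα : Function.Injective α) (hβ : Function.Injective β)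
    (hdisj : Disjoint (Set.range α) (Set.range β))
    (t : Fin 2 → ℝ) (h0 : t 0 = 0) (h1 : t 1 = 1) (Φ : (Fin d → E) → ℝ) :
    slide ![α, β] t Φ = pushforward β Φ := by
  funext x
  by_cases hall : ∀ i, ∃ k e, x i = ![α, β] k e
  · by_cases hin : ∃ g : Fin d → E, ∀ i, x i = β (g i)
    · rw [pushforward, dif_pos hin,
        slide_eq_of hα hβ hdisj t Φ x hall hin.choose
          (fun i => ⟨1, by simpa using hin.choose_spec i⟩)]
      have hc0 : (Finset.univ.filter fun i : Fin d => ∃ e, x i = ![α, β] 0 e).card = 0 := by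
        rw [Finset.card_eq_zero, Finset.filter_eq_empty_iff]
        rintro i - ⟨e, he⟩
        simp only [Matrix.cons_val_zero] at he
        exact Set.disjoint_left.mp hdisj ⟨e, he.symm⟩ ⟨hin.choose i, (hin.choose_spec i).symm⟩
      rw [Fin.prod_univ_two, h0, h1, hc0, one_pow, pow_zero, one_mul, mul_one]
    · rw [pushforward, dif_neg hin]
      have hnotall : ¬ ∀ i, ∃ e, x i = β e := by
        intro hc
        exact hin ⟨fun i => (hc i).choose, fun i => (hc i).choose_spec⟩
      push_neg at hnotall
      obtain ⟨i₀, hi₀⟩ := hnotall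
      have hmem : ∃ e, x i₀ = ![α, β] 0 e := by
        obtain ⟨k, e, hke⟩ := hall i₀
        fin_cases k
        · exact ⟨e, hke⟩
        · exact absurd (by simpa using hke) (hi₀ e)
      set g : Fin d → E := fun i => (hall i).choose_spec.choose with hgdef
      have hg : ∀ i, ∃ k, x i = ![α, β] k (g i) :=
        fun i => ⟨(hall i).choose, (hall i).choose_spec.choose_spec⟩
      rw [slide_eq_of hα hβ hdisj t Φ x hall g hg, Fin.prod_univ_two, h0,
        zero_pow, zero_mul, mul_zero]
      exact Finset.card_ne_zero_of_mem (Finset.mem_filter.mpr ⟨Finset.mem_univ i₀, hmem⟩)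
  · rw [slide_eq_zero t Φ x hall, pushforward, dif_neg]
    rintro ⟨g, hg⟩
    exact hall fun i => ⟨1, g i, by simpa using hg i⟩

end Statement4Aux5

theorem statement4 {E F : Type*} [Fintype E] [Fintype F] (d : ℕ) (hd : 1 ≤ d)
    (α β : E → F) (hα : Function.Injective α) (hβ : Function.Injective β)
    (hdisj : Disjoint (Set.range α) (Set.range β)) :
    (∀ s ∈ Set.Icc (0:ℝ) 1, ∀ Φ ∈ Mt d E, slide (n := 1) ![α, β] ![1 - s, s] Φ ∈ Mt d F) ∧
    Continuous (fun p : ↥(Set.Icc (0:ℝ) 1) × ↥(Mt d E) =>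
      slide (n := 1) ![α, β] ![1 - (p.1 : ℝ), (p.1 : ℝ)] (p.2 : (Fin d → E) → ℝ)) ∧
    (∀ Φ ∈ Mt d E, slide (n := 1) ![α, β] ![1 - (0:ℝ), (0:ℝ)] Φ = pushforward α Φ) ∧
    (∀ Φ ∈ Mt d E, slide (n := 1) ![α, β] ![1 - (1:ℝ), (1:ℝ)] Φ = pushforward β Φ) := by
  classical
  refine ⟨?_, ?_, ?_, ?_⟩
  · intro s hs Φ hΦ
    refine slide_isOTP hα hβ hdisj ![1 - s, s] ?_ ?_ ?_ Φ hΦ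
    · simpa using hs.2
    · simpa using hs.1
    · rcases lt_or_ge s 1 with h | h
      · left; simpa using h
      · right; simpa using lt_of_lt_of_le one_pos h
  · apply continuous_pi
    intro x
    by_cases h : ∀ i, ∃ k e, x i = ![α, β] k e
    · have heq : (fun p : ↥(Set.Icc (0:ℝ) 1) × ↥(Mt d E) =>
          slide (n := 1) ![α, β] ![1 - (p.1 : ℝ), (p.1 : ℝ)] (p.2 : (Fin d → E) → ℝ) x) =
          fun p => (p.2 : (Fin d → E) → ℝ) (fun i => (h i).choose_spec.choose) *
            ∏ k : Fin 2, (![1 - (p.1 : ℝ), (p.1 : ℝ)] k) ^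
              (Finset.univ.filter fun i : Fin d => ∃ e, x i = ![α, β] k e).card := by
        funext p
        rw [slide, dif_pos h]
        congr!
      rw [heq]
      refine Continuous.mul ?_ ?_
      · exact (continuous_apply _).comp (continuous_subtype_val.comp continuous_snd)
      · refine continuous_finset_prod _ fun k _ => Continuous.pow ?_ _
        fin_cases k
        · simp; exact (continuous_const.sub (continuous_subtype_val.comp continuous_fst))
        · simp; exact (continuous_subtype_val.comp continuous_fst)
    · have heq : (fun p : ↥(Set.Icc (0:ℝ) 1) × ↥(Mt d E) =>
          slide (n := 1) ![α, β] ![1 - (p.1 : ℝ), (p.1 : ℝ)] (p.2 : (Fin d → E) → ℝ) x) =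
          fun _ => (0 : ℝ) := funext fun p => slide_eq_zero _ _ x h
      rw [heq]
      exact continuous_const
  · intro Φ hΦ
    exact slide_pf_left hα hβ hdisj _ (by norm_num) (by norm_num) Φ
  · intro Φ hΦ
    exact slide_pf_right hα hβ hdisj _ (by norm_num) (by norm_num) Φ
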